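/- Let φ : ℝ^n → [−∞,+∞] be a measurable function. Then its subgraph sub φ ⊆ ℝ^{n+1} is directed with respect to e_{n+1}: for every x ∈ ℝ^{n+1} and every ρ > 0 the function t ↦ D_ρ(sub φ, x + t·e_{n+1}) is monotone decreasing on ℝ. -/

import Mathlib

open MeasureTheory Metric

/-- Approximate density of a set `M` at `x` with respect to radius `ρ`. -/
noncomputable def approxDensity {d : ℕ} (M : Set (EuclideanSpace ℝ (Fin d))) (ρ : ℝ)
    (x : EuclideanSpace ℝ (Fin d)) : ENNReal :=
  volume (M ∩ ball x ρ) / volume (ball x ρ)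

/-- `M` is directed with respect to `v`. -/
def DirectedWrt {d : ℕ} (M : Set (EuclideanSpace ℝ (Fin d)))
    (v : EuclideanSpace ℝ (Fin d)) : Prop :=
  ∀ x : EuclideanSpace ℝ (Fin d), ∀ ρ : ℝ, 0 < ρ →
    Antitone (fun t : ℝ => approxDensity M ρ (x + t • v))

/-- Measure-theoretic interior. -/
def mInterior {d : ℕ} (M : Set (EuclideanSpace ℝ (Fin d))) :
    Set (EuclideanSpace ℝ (Fin d)) :=
  {x | ∃ ρ > (0 : ℝ), volume (ball x ρ \ M) = 0}

/-- Measure-theoretic exterior. -/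
def mExterior {d : ℕ} (M : Set (EuclideanSpace ℝ (Fin d))) :
    Set (EuclideanSpace ℝ (Fin d)) :=
  {x | ∃ ρ > (0 : ℝ), volume (M ∩ ball x ρ) = 0}

/-- Measure-theoretic boundary. -/
def mBoundary {d : ℕ} (M : Set (EuclideanSpace ℝ (Fin d))) :
    Set (EuclideanSpace ℝ (Fin d)) :=
  (mInterior M ∪ mExterior M)ᶜ

/-- The subgraph of an extended-real-valued function on `ℝⁿ`, as a subset of `ℝⁿ⁺¹`. -/
def subgraph {n : ℕ} (φ : EuclideanSpace ℝ (Fin n) → EReal) :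
    Set (EuclideanSpace ℝ (Fin (n + 1))) :=
  {x | (x (Fin.last n) : EReal) < φ (WithLp.toLp 2 (fun i : Fin n => x i.castSucc))}

theorem subgraph_is_directed {n : ℕ}
    (φ : EuclideanSpace ℝ (Fin n) → EReal) (hφ : Measurable φ) :
    DirectedWrt (subgraph φ) (EuclideanSpace.single (Fin.last n) 1) := by
  intro x ρ hρ t s hts
  set e := EuclideanSpace.single (Fin.last n) (1 : ℝ) with he
  simp only [approxDensity]
  have hball : volume (ball (x + s • e) ρ) = volume (ball (x + t • e) ρ) := by
    simp only [Measure.addHaar_ball_center]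
  rw [hball]
  refine ENNReal.div_le_div_right ?_ _
  set c := s - t with hc
  have hc0 : 0 ≤ c := sub_nonneg.2 hts
  have hpre : volume (subgraph φ ∩ ball (x + s • e) ρ)
      = volume ((fun y => y + c • e) ⁻¹' (subgraph φ ∩ ball (x + s • e) ρ)) :=
    (measure_preimage_add_right _ _ _).symm
  rw [hpre]
  apply measure_mono
  rintro y ⟨hy1, hy2⟩
  have hlast : (y + c • e) (Fin.last n) = y (Fin.last n) + c := by
    simp [he, EuclideanSpace.single_apply]
  have hcast : ∀ i : Fin n, (y + c • e) i.castSucc = y i.castSucc := by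
    intro i
    simp [he, EuclideanSpace.single_apply, (Fin.castSucc_lt_last i).ne]
  constructor
  · simp only [subgraph, Set.mem_setOf_eq] at hy1 ⊢
    have h1 : (y (Fin.last n) : EReal) ≤ ((y + c • e) (Fin.last n) : ℝ) := by
      rw [hlast]; exact_mod_cast le_add_of_nonneg_right hc0
    have h2 : φ (WithLp.toLp 2 (fun i : Fin n => (y + c • e) i.castSucc)) = φ (WithLp.toLp 2 (fun i : Fin n => y i.castSucc)) := by
      rw [show (fun i : Fin n => (y + c • e) i.castSucc) = (fun i : Fin n => y i.castSucc) from funext hcast]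
    exact lt_of_le_of_lt h1 (h2 ▸ hy1)
  · have hx : x + s • e = (x + t • e) + c • e := by
      rw [add_assoc, ← add_smul]
      congr 2
      ring
    have hd : dist y (x + t • e) = dist (y + c • e) (x + s • e) := by
      rw [hx, dist_add_right]
    rw [mem_ball, hd]
    exact hy2
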